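/- In the reverse second-price auction game, selecting compute level θ*_i = argmax_{θ∈Θ}(q_i(θ) − c_i(θ)) together with price p_i = c_i(θ*_i) is a dominant strategy for provider i: this bid yields utility at least as high as any other bid (θ_i, p_i), regardless of the other providers' bids. -/
import Mathlib


open scoped Classical

/-- Index of a provider achieving the highest value among `v : Fin N → ℝ`. -/
noncomputable def winIdx (N : ℕ) (hN : 0 < N) (v : Fin N → ℝ) : Fin N :=
  Classical.choose (Finset.exists_max_image (Finset.univ : Finset (Fin N)) v
    ⟨⟨0, hN⟩, Finset.mem_univ _⟩)

/-- Index of a provider achieving the highest value among the remaining providers. -/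
noncomputable def secondIdx (N : ℕ) (hN : 2 ≤ N) (v : Fin N → ℝ) : Fin N :=
  Classical.choose (Finset.exists_max_image
    ((Finset.univ : Finset (Fin N)).erase (winIdx N (by omega) v)) v
    (Finset.card_pos.mp (by
      rw [Finset.card_erase_of_mem (Finset.mem_univ _), Finset.card_univ, Fintype.card_fin]
      omega)))

/-- Utility of provider `i` in the reverse second-price auction: with offered values
`V_j = q_j(θ_j) − p_j`, the winner `π(1)` (highest value) receives the payment
`P = q_{π(1)}(θ_{π(1)}) − V_{π(2)}` minus their generation cost; all others receive `0`. -/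
noncomputable def auctionU (N : ℕ) (hN : 2 ≤ N) (Θ : Type*) (q c : Fin N → Θ → ℝ)
    (θv : Fin N → Θ) (pr : Fin N → ℝ) (i : Fin N) : ℝ :=
  let v : Fin N → ℝ := fun j => q j (θv j) - pr j
  let w := winIdx N (by omega) v
  let s := secondIdx N hN v
  if i = w then (q w (θv w) - (q s (θv s) - pr s)) - c i (θv i) else 0

lemma winIdx_max (N : ℕ) (hN : 0 < N) (v : Fin N → ℝ) (j : Fin N) :
    v j ≤ v (winIdx N hN v) :=
  (Classical.choose_spec (Finset.exists_max_image (Finset.univ : Finset (Fin N)) v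
    ⟨⟨0, hN⟩, Finset.mem_univ _⟩)).2 j (Finset.mem_univ _)

lemma secondIdx_mem (N : ℕ) (hN : 2 ≤ N) (v : Fin N → ℝ) :
    secondIdx N hN v ∈ (Finset.univ : Finset (Fin N)).erase (winIdx N (by omega) v) :=
  (Classical.choose_spec (Finset.exists_max_image
    ((Finset.univ : Finset (Fin N)).erase (winIdx N (by omega) v)) v
    (Finset.card_pos.mp (by
      rw [Finset.card_erase_of_mem (Finset.mem_univ _), Finset.card_univ, Fintype.card_fin]
      omega)))).1

lemma secondIdx_max (N : ℕ) (hN : 2 ≤ N) (v : Fin N → ℝ) (j : Fin N)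
    (hj : j ≠ winIdx N (by omega) v) : v j ≤ v (secondIdx N hN v) :=
  (Classical.choose_spec (Finset.exists_max_image
    ((Finset.univ : Finset (Fin N)).erase (winIdx N (by omega) v)) v
    (Finset.card_pos.mp (by
      rw [Finset.card_erase_of_mem (Finset.mem_univ _), Finset.card_univ, Fintype.card_fin]
      omega)))).2 j (Finset.mem_erase.mpr ⟨hj, Finset.mem_univ _⟩)

/-- **The welfare-maximizing compute with cost bidding is a dominant strategy.** In the
reverse second-price auction, if `θ*` maximizes `q_i(θ) − c_i(θ)` over `Θ`, then bidding
`(θ*, c_i(θ*))` yields utility at least as high as any other bid `(θᵢ', pᵢ')`, regardless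
of the other providers' bids (assuming no ties in offered values in either bid profile). -/
theorem dominant_strategy_auction (N : ℕ) (hN : 2 ≤ N) (Θ : Type*) [Fintype Θ]
    (q c : Fin N → Θ → ℝ)
    (hq : ∀ i t, 0 ≤ q i t) (hc : ∀ i t, 0 ≤ c i t)
    (i : Fin N) (θstar : Θ)
    (hstar : ∀ t : Θ, q i t - c i t ≤ q i θstar - c i θstar)
    (θv : Fin N → Θ) (pr : Fin N → ℝ) (hpr : ∀ j, 0 ≤ pr j)
    (θi' : Θ) (pi' : ℝ) (hpi' : 0 ≤ pi')
    (hinj₁ : Function.Injective (fun j =>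
      q j (Function.update θv i θstar j) - Function.update pr i (c i θstar) j))
    (hinj₂ : Function.Injective (fun j =>
      q j (Function.update θv i θi' j) - Function.update pr i pi' j)) :
    auctionU N hN Θ q c (Function.update θv i θi') (Function.update pr i pi') i
      ≤ auctionU N hN Θ q c (Function.update θv i θstar)
          (Function.update pr i (c i θstar)) i := by
  have hN0 : 0 < N := by omega
  set θ1 := Function.update θv i θstar with hθ1
  set p1 := Function.update pr i (c i θstar) with hp1
  set θ2 := Function.update θv i θi' with hθ2
  set p2 := Function.update pr i pi' with hp2
  set v1 : Fin N → ℝ := fun j => q j (θ1 j) - p1 j with hv1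
  set v2 : Fin N → ℝ := fun j => q j (θ2 j) - p2 j with hv2
  have hvv : ∀ j, j ≠ i → v1 j = v2 j := by
    intro j hj
    simp [hv1, hv2, hθ1, hθ2, hp1, hp2, Function.update_of_ne hj]
  have hθ1i : θ1 i = θstar := Function.update_self _ _ _
  have hθ2i : θ2 i = θi' := Function.update_self _ _ _
  have hp1i : p1 i = c i θstar := Function.update_self _ _ _
  have hp2i : p2 i = pi' := Function.update_self _ _ _
  have hv1i : v1 i = q i θstar - c i θstar := by simp [hv1, hθ1i, hp1i]
  have hv2i : v2 i = q i θi' - pi' := by simp [hv2, hθ2i, hp2i]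
  set w1 := winIdx N hN0 v1 with hw1
  set s1 := secondIdx N hN v1 with hs1
  set w2 := winIdx N hN0 v2 with hw2
  set s2 := secondIdx N hN v2 with hs2
  show (if i = w2 then (q w2 (θ2 w2) - (q s2 (θ2 s2) - p2 s2)) - c i (θ2 i) else 0)
      ≤ (if i = w1 then (q w1 (θ1 w1) - (q s1 (θ1 s1) - p1 s1)) - c i (θ1 i) else 0)
  by_cases hi2 : i = w2 <;> by_cases hi1 : i = w1
  · -- wins in both profiles
    rw [if_pos hi2, if_pos hi1, ← hi1, ← hi2, hθ1i, hθ2i]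
    have h1 : q s1 (θ1 s1) - p1 s1 = v1 s1 := rfl
    have h2 : q s2 (θ2 s2) - p2 s2 = v2 s2 := rfl
    rw [h1, h2]
    have hs1i : s1 ≠ i := by
      have := secondIdx_mem N hN v1
      rw [← hw1, ← hs1, ← hi1] at this
      exact (Finset.mem_erase.mp this).1
    have h3 : v1 s1 ≤ v2 s2 := by
      rw [hvv s1 hs1i]
      exact secondIdx_max N hN v2 s1 (by rw [← hw2, ← hi2]; exact hs1i)
    have h4 := hstar θi'
    linarith
  · -- wins only in profile 2
    rw [if_pos hi2, if_neg hi1, ← hi2, hθ2i]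
    have h2 : q s2 (θ2 s2) - p2 s2 = v2 s2 := rfl
    rw [h2]
    have hw1i : w1 ≠ i := fun h => hi1 h.symm
    have h5 : v1 i ≤ v1 w1 := winIdx_max N hN0 v1 i
    have h6 : v1 w1 = v2 w1 := hvv w1 hw1i
    have h7 : v2 w1 ≤ v2 s2 :=
      secondIdx_max N hN v2 w1 (by rw [← hw2, ← hi2]; exact hw1i)
    have h4 := hstar θi'
    rw [hv1i] at h5
    linarith
  · -- wins only in profile 1
    rw [if_neg hi2, if_pos hi1, ← hi1, hθ1i]
    have h1 : q s1 (θ1 s1) - p1 s1 = v1 s1 := rfl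
    rw [h1]
    have h8 : v1 s1 ≤ v1 w1 := winIdx_max N hN0 v1 s1
    rw [← hi1, hv1i] at h8
    linarith
  · rw [if_neg hi2, if_neg hi1]
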